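/- Fix n ≥ 1, (h,x) ∈ ℝ² and t > 0. For all u_1,…,u_n, v_1,…,v_n ∈ ℂ with u_i ≠ v_j, u_i ≠ ±1 and v_i ≠ ±1 for all i, j, write I_n^{(h,x;t)} and Î_n^{(h,x;t)} for the integrands with parameters (h,x,t). Then under the substitution u_i ↦ -v_i, v_i ↦ -u_i together with x ↦ -x the integrands are invariant: I_n^{(h,x;t)}((u_1,…,u_n); (v_1,…,v_n)) = I_n^{(h,-x;t)}((-v_1,…,-v_n); (-u_1,…,-u_n)), and the same identity holds for Î_n. (This change-of-variables identity is the algebraic content of the symmetry p(h,x;t) = p(h,-x;t) and p̂(h,x;t) = p̂(h,-x;t).) -/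

import Mathlib

open MeasureTheory Filter

noncomputable section

/-- The left wedge contour crossing the real axis at `c`: it runs from `∞·e^{-2πi/3}`
to `∞·e^{2πi/3}` and meets the real axis at `c`. -/
def wedgeL (c : ℝ) (s : ℝ) : ℂ :=
  Complex.ofReal (c - |s| / 2) + Complex.I * Complex.ofReal (s * Real.sqrt 3 / 2)

/-- The right wedge contour crossing the real axis at `c`: the negation (as a set) of
`wedgeL (-c)`, oriented from `∞·e^{-πi/3}` to `∞·e^{πi/3}`. -/
def wedgeR (c : ℝ) (s : ℝ) : ℂ := -wedgeL (-c) (-s)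

/-- The contour `Γ_L`, crossing the real axis at `-1/2 ∈ (-1,0)`. -/
def gammaL : ℝ → ℂ := wedgeL (-1/2)

/-- The contour `Γ_R = -Γ_L`, crossing the real axis at `1/2 ∈ (0,1)`. -/
def gammaR : ℝ → ℂ := wedgeR (1/2)

/-- `f_{h,x;t}(w) = exp(-(t/3)w³ + x·w² + h·w)`. -/
def fExp (h x t : ℝ) (w : ℂ) : ℂ :=
  Complex.exp (-(t : ℂ) / 3 * w ^ 3 + (x : ℂ) * w ^ 2 + (h : ℂ) * w)

/-- `S_k(W;W') = Σ w_i^k - Σ (w'_i)^k`. -/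
def Spow {n n' : ℕ} (k : ℕ) (W : Fin n → ℂ) (W' : Fin n' → ℂ) : ℂ :=
  (∑ i, W i ^ k) - ∑ i, W' i ^ k

/-- `H(W;W') = (1/12)S₁⁴ + (1/4)S₂² - (1/3)S₁S₃`. -/
def Hfun {n n' : ℕ} (W : Fin n → ℂ) (W' : Fin n' → ℂ) : ℂ :=
  (1 / 12) * Spow 1 W W' ^ 4 + (1 / 4) * Spow 2 W W' ^ 2
    - (1 / 3) * Spow 1 W W' * Spow 3 W W'

/-- The Cauchy determinant `C(W;W') = det[1/(w_i - w'_j)]`. -/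
def CauchyDet {n : ℕ} (W W' : Fin n → ℂ) : ℂ :=
  Matrix.det (Matrix.of fun i j => 1 / (W i - W' j))

/-- The integrand `I_n(U;V)` in its explicit product form. -/
def integrandI (n : ℕ) (h x t : ℝ) (U V : Fin n → ℂ) : ℂ :=
  (-1 : ℂ) ^ n * Complex.exp (-(2 / 3 : ℂ) * (t : ℂ) + 2 * (h : ℂ)) *
    ((∏ i, ∏ j, if i < j then (U i - U j) ^ 2 * (V i - V j) ^ 2 else 1) /
      ∏ i, ∏ j, (U i - V j) ^ 2) *
    (∏ i, ((1 + V i) * (1 - U i) * fExp h x t (U i)) /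
      ((1 + U i) * (1 - V i) * fExp h x t (V i))) *
    Hfun (Fin.snoc U 1) (Fin.snoc V (-1))

/-- The integrand `Î_n(U;V) = [2/Σ(-u_i+v_i)]·I_n(U;V)`. -/
def integrandIhat (n : ℕ) (h x t : ℝ) (U V : Fin n → ℂ) : ℂ :=
  (2 / ∑ i, (-U i + V i)) * integrandI n h x t U V

/-- The `2n`-fold contour integral `∫_{Γ_L^n × Γ_R^n} F(U;V) ∏ du_i/(2πi) ∏ dv_i/(2πi)`. -/
def contourProdIntegral (n : ℕ) (F : (Fin n → ℂ) → (Fin n → ℂ) → ℂ) : ℂ :=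
  ∫ sr : (Fin n → ℝ) × (Fin n → ℝ),
    F (fun i => gammaL (sr.1 i)) (fun i => gammaR (sr.2 i)) *
      ((∏ i, deriv gammaL (sr.1 i) / (2 * Real.pi * Complex.I)) *
        ∏ i, deriv gammaR (sr.2 i) / (2 * Real.pi * Complex.I))

/-- `p(h,x;t)` as a complex series of contour integrals. -/
def pC (h x t : ℝ) : ℂ :=
  ∑' n : ℕ, (1 / (Nat.factorial (n + 1) : ℂ) ^ 2) *
    contourProdIntegral (n + 1) (integrandI (n + 1) h x t)

/-- The joint density function `p(h,x;t)`. -/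
def pFun (h x t : ℝ) : ℝ := (pC h x t).re

/-- `p̂(h,x;t)` as a complex series of contour integrals. -/
def pHatC (h x t : ℝ) : ℂ :=
  ∑' n : ℕ, (1 / (Nat.factorial (n + 1) : ℂ) ^ 2) *
    contourProdIntegral (n + 1) (integrandIhat (n + 1) h x t)

/-- The joint density function `p̂(h,x;t)`. -/
def pHatFun (h x t : ℝ) : ℝ := (pHatC h x t).re




lemma fexp_neg (h x t : ℝ) (w : ℂ) : fExp h (-x) t (-w) = (fExp h x t w)⁻¹ := by
  unfold fExp
  rw [← Complex.exp_neg]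
  congr 1
  push_cast
  ring

lemma sum_snoc_pow {n : ℕ} (W : Fin n → ℂ) (a : ℂ) (k : ℕ) :
    ∑ i : Fin (n + 1), (Fin.snoc W a i) ^ k = (∑ i, W i ^ k) + a ^ k := by
  rw [Fin.sum_univ_castSucc]
  simp

lemma sum_neg_pow {n : ℕ} (W : Fin n → ℂ) (k : ℕ) :
    ∑ i, (-W i) ^ k = (-1 : ℂ) ^ k * ∑ i, W i ^ k := by
  rw [Finset.mul_sum]
  exact Finset.sum_congr rfl fun i _ => by rw [neg_pow]

/-- Under `u_i ↦ -v_i`, `v_i ↦ -u_i`, `x ↦ -x` the integrands `I_n` and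
`Î_n` are invariant. -/
theorem integrand_symmetry (n : ℕ) (hn : 1 ≤ n) (h x t : ℝ) (ht : 0 < t)
    (U V : Fin n → ℂ) (hUV : ∀ i j, U i ≠ V j)
    (hU1 : ∀ i, U i ≠ 1) (hU1' : ∀ i, U i ≠ -1)
    (hV1 : ∀ i, V i ≠ 1) (hV1' : ∀ i, V i ≠ -1) :
    integrandI n h x t U V =
      integrandI n h (-x) t (fun i => -V i) (fun i => -U i) ∧
    integrandIhat n h x t U V =
      integrandIhat n h (-x) t (fun i => -V i) (fun i => -U i) := by
  have hfU : ∀ i, fExp h x t (U i) ≠ 0 := fun i => Complex.exp_ne_zero _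
  have hfV : ∀ i, fExp h x t (V i) ≠ 0 := fun i => Complex.exp_ne_zero _
  -- numerator of the Vandermonde ratio
  have hnum : (∏ i, ∏ j, if i < j then ((-V i) - (-V j)) ^ 2 * ((-U i) - (-U j)) ^ 2 else 1)
      = ∏ i : Fin n, ∏ j : Fin n, if i < j then (U i - U j) ^ 2 * (V i - V j) ^ 2 else 1 := by
    refine Finset.prod_congr rfl fun i _ => Finset.prod_congr rfl fun j _ => ?_
    split_ifs
    · ring
    · rfl
  -- denominator of the Vandermonde ratio
  have hden : (∏ i : Fin n, ∏ j : Fin n, ((-V i) - (-U j)) ^ 2)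
      = ∏ i : Fin n, ∏ j : Fin n, (U i - V j) ^ 2 := by
    rw [Finset.prod_comm]
    refine Finset.prod_congr rfl fun i _ => Finset.prod_congr rfl fun j _ => ?_
    ring
  -- middle product
  have hmid : (∏ i, ((1 + (-U i)) * (1 - (-V i)) * fExp h (-x) t (-V i)) /
        ((1 + (-V i)) * (1 - (-U i)) * fExp h (-x) t (-U i)))
      = ∏ i, ((1 + V i) * (1 - U i) * fExp h x t (U i)) /
        ((1 + U i) * (1 - V i) * fExp h x t (V i)) := by
    refine Finset.prod_congr rfl fun i _ => ?_
    rw [fexp_neg, fexp_neg]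
    have h1 : (1 : ℂ) + U i ≠ 0 := by
      intro hc; apply hU1' i; linear_combination hc
    have h2 : (1 : ℂ) - V i ≠ 0 := by
      intro hc; apply hV1 i; linear_combination -hc
    have h3 := hfU i
    have h4 := hfV i
    field_simp
    rw [div_eq_iff (mul_ne_zero (by rw [← sub_eq_add_neg]; exact h2) (by rw [sub_neg_eq_add]; exact h1))]
    ring
  -- the H factor
  have hS1 : Spow 1 (Fin.snoc (fun i => -V i) 1) (Fin.snoc (fun i => -U i) (-1))
      = Spow 1 (Fin.snoc U 1) (Fin.snoc V (-1)) := by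
    unfold Spow
    rw [sum_snoc_pow, sum_snoc_pow, sum_snoc_pow, sum_snoc_pow, sum_neg_pow, sum_neg_pow]
    ring
  have hS2 : Spow 2 (Fin.snoc (fun i => -V i) 1) (Fin.snoc (fun i => -U i) (-1))
      = -Spow 2 (Fin.snoc U 1) (Fin.snoc V (-1)) := by
    unfold Spow
    rw [sum_snoc_pow, sum_snoc_pow, sum_snoc_pow, sum_snoc_pow, sum_neg_pow, sum_neg_pow]
    ring
  have hS3 : Spow 3 (Fin.snoc (fun i => -V i) 1) (Fin.snoc (fun i => -U i) (-1))
      = Spow 3 (Fin.snoc U 1) (Fin.snoc V (-1)) := by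
    unfold Spow
    rw [sum_snoc_pow, sum_snoc_pow, sum_snoc_pow, sum_snoc_pow, sum_neg_pow, sum_neg_pow]
    ring
  have hH : Hfun (Fin.snoc (fun i => -V i) 1) (Fin.snoc (fun i => -U i) (-1))
      = Hfun (Fin.snoc U 1) (Fin.snoc V (-1)) := by
    unfold Hfun
    rw [hS1, hS2, hS3]
    ring
  have hI : integrandI n h x t U V =
      integrandI n h (-x) t (fun i => -V i) (fun i => -U i) := by
    unfold integrandI
    rw [hnum, hden, hmid, hH]
  refine ⟨hI, ?_⟩
  unfold integrandIhat
  rw [hI]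
  congr 1
  congr 1
  exact Finset.sum_congr rfl fun i _ => by ring


end
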